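/- arXiv:math/0003122 — 2 statements merged into one kernel-verified Lean document; each statement's English description precedes it below -/
import Mathlib

section
/- Let ε_i : V_i → A_i (i = 1,2,3) be right resolutions of objects V_i in an abelian category, let φ_{ij} : ⟨V_i, A_j⟩ → ⟨A_i, A_j⟩ (i < j) be chain maps satisfying φ_{ij}(f) ∘ ε_i = f for all f, and let μ : ⟨V_2,A_3⟩ ⊗ ⟨V_1,A_2⟩ → ⟨V_1,A_3⟩ be a chain map such that φ_{13} ∘ μ is chain homotopic to the composition c ∘ (φ_{23} ⊗ φ_{12}). Then for all classes α ∈ [V_2,A_3] and β ∈ [V_1,A_2], can_{13}(μ_*(α ⊗ β)) equals the cup-product of can_{23}(α) and can_{12}(β) in Ext(V_1,V_3), where Ext(V_i,A_j), Ext(A_i,A_j), Ext(V_i,V_j) are identified via the quasi-isomorphisms ε. -/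
/-!
STATEMENT 4 (Proposition 1): Let `ε_i : V_i → A_i` (i = 1,2,3) be right resolutions of objects
`V_i` in an abelian category, let `φ_{ij} : ⟨V_i,A_j⟩ → ⟨A_i,A_j⟩` (i < j) be chain maps of
hom-complexes satisfying `φ_{ij}(f) ∘ ε_i = f`, and let
`μ : ⟨V_2,A_3⟩ ⊗ ⟨V_1,A_2⟩ → ⟨V_1,A_3⟩` be a chain map such that `φ_{13} ∘ μ` is chain
homotopic to `c ∘ (φ_{23} ⊗ φ_{12})` (where `c` is composition). Then for all classes
`α ∈ [V_2,A_3]`, `β ∈ [V_1,A_2]` (represented by cocycles `u`, `v`),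
`can_{13}(μ_*(α ⊗ β))` equals the cup-product (composition in the derived category) of
`can_{23}(α)` and `can_{12}(β)` in `Ext(V_1,V_3)`, the Ext-groups being identified via the
quasi-isomorphisms `ε`.
-/

open CategoryTheory Limits CochainComplex HomComplex DerivedCategory

universe u v w t

variable {k : Type t} [CommRing k] {C : Type u} [Category.{v} C] [Abelian C]
  [CategoryTheory.Linear k C] [HasDerivedCategory.{w} C]

/-- The complex concentrated in degree `0` associated to an object. -/
noncomputable abbrev sgl (X : C) : CochainComplex C ℤ :=
  (HomologicalComplex.single C (ComplexShape.up ℤ) 0).obj X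

/-- A cocycle of degree `n` in `⟨F,G⟩`, as a chain map `F ⟶ G⟦n⟧`. -/
noncomputable def cocycleToHom {F G : CochainComplex C ℤ} {n : ℤ}
    (w : Cochain F G n) (hw : δ n (n + 1) w = 0) : F ⟶ G⟦n⟧ :=
  (Cocycle.equivHom F (G⟦n⟧)).symm ((Cocycle.mk w (n + 1) rfl hw).rightShift n 0 (zero_add n))

/-- The canonical map `can : [F,G]^n → Ext^n(F,G) = Hom_D(F,G[n])` on cocycle
representatives. -/
noncomputable def canD {F G : CochainComplex C ℤ} {n : ℤ}
    (w : Cochain F G n) (hw : δ n (n + 1) w = 0) : Q.obj F ⟶ (Q.obj G)⟦n⟧ :=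
  Q.map (cocycleToHom w hw) ≫ (Q.commShiftIso n).hom.app G

set_option linter.unusedSectionVars false

lemma cocycleToHom_f {F G : CochainComplex C ℤ} {n : ℤ}
    (w : Cochain F G n) (hw : δ n (n + 1) w = 0) (i j : ℤ) (hij : i + n = j) :
    (cocycleToHom w hw).f i =
      w.v i j hij ≫ (G.shiftFunctorObjXIso n i j (by omega)).inv := by
  subst hij
  simp [cocycleToHom, Cocycle.rightShift,
    Cochain.rightShift_v _ n 0 (zero_add n) i i (add_zero i) (i + n) rfl]
  rfl

lemma ofHom_cocycleToHom {F G : CochainComplex C ℤ} {n : ℤ}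
    (w : Cochain F G n) (hw : δ n (n + 1) w = 0) :
    Cochain.ofHom (cocycleToHom w hw) = w.rightShift n 0 (zero_add n) := by
  simp [cocycleToHom, Cocycle.rightShift]

set_option linter.unusedSectionVars false

lemma cocycleToHom_eq_comp {F G H : CochainComplex C ℤ} (f : F ⟶ G) {n : ℤ}
    (x : Cochain G H n) (hx : δ n (n + 1) x = 0) (w : Cochain F H n)
    (hw : δ n (n + 1) w = 0) (h : (Cochain.ofHom f).comp x (zero_add n) = w) :
    cocycleToHom w hw = f ≫ cocycleToHom x hx := by
  subst h
  ext i
  rw [HomologicalComplex.comp_f, cocycleToHom_f _ _ i (i + n) rfl,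
    cocycleToHom_f _ _ i (i + n) rfl,
    Cochain.zero_cochain_comp_v _ _ i (i + n) rfl, Cochain.ofHom_v]
  simp
  exact Category.assoc _ _ _

lemma cochain_v_comp_eqToHom {F G : CochainComplex C ℤ} {n : ℤ} (b : Cochain F G n)
    (x y y' : ℤ) (h : x + n = y) (h' : x + n = y') (e : G.X y = G.X y') :
    b.v x y h ≫ eqToHom e = b.v x y' h' := by
  obtain rfl : y = y' := by omega
  simp

lemma cocycleToHom_comp {F G H : CochainComplex C ℤ} {p q n : ℤ} (hn : p + q = n)
    (a : Cochain F G p) (ha : δ p (p + 1) a = 0) (b : Cochain G H q) (hb : δ q (q + 1) b = 0)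
    (hab : δ n (n + 1) (a.comp b hn) = 0) :
    cocycleToHom (a.comp b hn) hab =
      cocycleToHom a ha ≫ (cocycleToHom b hb)⟦p⟧' ≫
        (CategoryTheory.shiftFunctorAdd' (CochainComplex C ℤ) q p n (by omega)).inv.app H := by
  ext i
  rw [HomologicalComplex.comp_f, HomologicalComplex.comp_f,
    cocycleToHom_f _ _ i (i + n) rfl, cocycleToHom_f _ _ i (i + p) rfl,
    shiftFunctor_map_f', cocycleToHom_f _ _ (i + p) (i + p + q) rfl,
    a.comp_v b hn i (i + p) (i + n) rfl (by omega),
    CochainComplex.shiftFunctorAdd'_inv_app_f']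
  simp only [shiftFunctorObjXIso, HomologicalComplex.XIsoOfEq, eqToIso.inv, eqToIso.hom,
    eqToHom_trans, Category.assoc, eqToHom_refl, Category.id_comp, Category.comp_id]
  erw [Category.comp_id, Category.comp_id, Category.comp_id]
  erw [cochain_v_comp_eqToHom b (i+p) (i+p+q) (i+n) rfl (by omega)]
  rfl

lemma Q_map_cocycleToHom_congr {F G : CochainComplex C ℤ} {n : ℤ}
    (a b : Cochain F G n) (ha : δ n (n + 1) a = 0) (hb : δ n (n + 1) b = 0)
    (K : Cochain F G (n - 1)) (hK : δ (n - 1) n K = a - b) :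
    Q.map (cocycleToHom a ha) = Q.map (cocycleToHom b hb) := by
  have ho : Homotopy (cocycleToHom a ha) (cocycleToHom b hb) :=
    (Cochain.equivHomotopy _ _).symm ⟨n.negOnePow • K.rightShift n (-1) (by omega), by
      rw [ofHom_cocycleToHom, ofHom_cocycleToHom, δ_units_smul,
        K.δ_rightShift n (-1) 0 (by omega) n (zero_add n), hK, smul_smul, Int.units_mul_self,
        one_smul, ← Cochain.rightShift_add, sub_add_cancel]⟩
  exact HomologicalComplexUpToQuasiIso.Q_map_eq_of_homotopy ho

lemma quad {M : Type*} [AddCommGroup M] {a b x y z w d₁ d₂ d₃ d₄ : M}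
    (e1 : a - b = d₁ + x + y) (e2 : (0 : M) = d₂ + x + z) (e3 : (0 : M) = d₃ + w + y)
    (e4 : (0 : M) = d₄ + w + z) :
    a - b = d₁ - d₂ - d₃ + d₄ := by
  have h2 : d₂ + (x + z) = 0 := by rw [← add_assoc]; exact e2.symm
  have h3 : d₃ + (w + y) = 0 := by rw [← add_assoc]; exact e3.symm
  have h4 : d₄ + (w + z) = 0 := by rw [← add_assoc]; exact e4.symm
  rw [e1, eq_neg_of_add_eq_zero_left h2, eq_neg_of_add_eq_zero_left h3,
    eq_neg_of_add_eq_zero_left h4]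
  abel

lemma commShift_compat {A₂ A₃ : CochainComplex C ℤ} (q p : ℤ) (cu : A₂ ⟶ A₃⟦q⟧) :
    Q.map (cu⟦p⟧') ≫
      Q.map ((CategoryTheory.shiftFunctorAdd' (CochainComplex C ℤ) q p (q + p) rfl).inv.app A₃) ≫
      (Q.commShiftIso (q + p)).hom.app A₃ =
    (Q.commShiftIso p).hom.app A₂ ≫ (Q.map cu)⟦p⟧' ≫ ((Q.commShiftIso q).hom.app A₃)⟦p⟧' ≫
      (CategoryTheory.shiftFunctorAdd' (DerivedCategory C) q p (q + p) rfl).inv.app (Q.obj A₃) := by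
  rw [CategoryTheory.shiftFunctorAdd'_eq_shiftFunctorAdd,
    CategoryTheory.shiftFunctorAdd'_eq_shiftFunctorAdd,
    Q.commShiftIso_add, Functor.CommShift.isoAdd_hom_app]
  slice_lhs 2 3 => rw [← Q.map_comp, Iso.inv_hom_id_app]
  simp only [Functor.comp_obj, CategoryTheory.Functor.map_id, Category.id_comp, Category.assoc]
  rw [Q.commShiftIso_hom_naturality_assoc cu p]

theorem proposition1
    (V₁ V₂ V₃ : C) (A₁ A₂ A₃ : CochainComplex C ℤ)
    (hA₁ : ∀ n : ℤ, n < 0 → IsZero (A₁.X n)) (hA₂ : ∀ n : ℤ, n < 0 → IsZero (A₂.X n))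
    (hA₃ : ∀ n : ℤ, n < 0 → IsZero (A₃.X n))
    (ε₁ : sgl V₁ ⟶ A₁) [QuasiIso ε₁] (ε₂ : sgl V₂ ⟶ A₂) [QuasiIso ε₂]
    (ε₃ : sgl V₃ ⟶ A₃) [QuasiIso ε₃]
    -- the chain maps φ_{ij} : ⟨V_i,A_j⟩ → ⟨A_i,A_j⟩ for i < j
    (φ₁₂ : ∀ n : ℤ, Cochain (sgl V₁) A₂ n →+ Cochain A₁ A₂ n)
    (φ₁₃ : ∀ n : ℤ, Cochain (sgl V₁) A₃ n →+ Cochain A₁ A₃ n)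
    (φ₂₃ : ∀ n : ℤ, Cochain (sgl V₂) A₃ n →+ Cochain A₂ A₃ n)
    (hφ₁₂δ : ∀ (n : ℤ) f, δ n (n + 1) (φ₁₂ n f) = φ₁₂ (n + 1) (δ n (n + 1) f))
    (hφ₁₃δ : ∀ (n : ℤ) f, δ n (n + 1) (φ₁₃ n f) = φ₁₃ (n + 1) (δ n (n + 1) f))
    (hφ₂₃δ : ∀ (n : ℤ) f, δ n (n + 1) (φ₂₃ n f) = φ₂₃ (n + 1) (δ n (n + 1) f))
    -- condition (a): φ_{ij}(f) ∘ ε_i = f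
    (hφ₁₂ε : ∀ (n : ℤ) f, (Cochain.ofHom ε₁).comp (φ₁₂ n f) (zero_add n) = f)
    (hφ₁₃ε : ∀ (n : ℤ) f, (Cochain.ofHom ε₁).comp (φ₁₃ n f) (zero_add n) = f)
    (hφ₂₃ε : ∀ (n : ℤ) f, (Cochain.ofHom ε₂).comp (φ₂₃ n f) (zero_add n) = f)
    -- the pairing μ : ⟨V_2,A_3⟩ ⊗ ⟨V_1,A_2⟩ → ⟨V_1,A_3⟩
    (μ : ∀ (q p r : ℤ), q + p = r →
      Cochain (sgl V₂) A₃ q → Cochain (sgl V₁) A₂ p → Cochain (sgl V₁) A₃ r)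
    -- μ is a chain map on the tensor product (Leibniz rule, plus biadditivity)
    (hμδ : ∀ (q p r : ℤ) (h : q + p = r) f g,
      δ r (r + 1) (μ q p r h f g) =
        μ (q + 1) p (r + 1) (by omega) (δ q (q + 1) f) g +
          (q.negOnePow : ℤ) • μ q (p + 1) (r + 1) (by omega) f (δ p (p + 1) g))
    (hμadd₁ : ∀ (q p r : ℤ) (h : q + p = r) f f' g,
      μ q p r h (f + f') g = μ q p r h f g + μ q p r h f' g)
    (hμadd₂ : ∀ (q p r : ℤ) (h : q + p = r) f g g',
      μ q p r h f (g + g') = μ q p r h f g + μ q p r h f g')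
    -- condition (b): φ_{13} ∘ μ is homotopic to c ∘ (φ_{23} ⊗ φ_{12})
    (H : ∀ (q p r : ℤ), q + p = r + 1 →
      Cochain (sgl V₂) A₃ q → Cochain (sgl V₁) A₂ p → Cochain A₁ A₃ r)
    (hH : ∀ (q p r : ℤ) (h : q + p = r) f g,
      φ₁₃ r (μ q p r h f g) - (φ₁₂ p g).comp (φ₂₃ q f) (show p + q = r by omega) =
        δ (r - 1) r (H q p (r - 1) (by omega) f g) +
          H (q + 1) p r (by omega) (δ q (q + 1) f) g +
          (q.negOnePow : ℤ) • H q (p + 1) r (by omega) f (δ p (p + 1) g)) :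
    -- conclusion: for all classes α, β represented by cocycles u, v, the diagram commutes:
    ∀ (q p : ℤ) (u : Cochain (sgl V₂) A₃ q) (hu : δ q (q + 1) u = 0)
      (v : Cochain (sgl V₁) A₂ p) (hv : δ p (p + 1) v = 0)
      (huv : δ (q + p) (q + p + 1) (μ q p (q + p) rfl u v) = 0),
      canD (μ q p (q + p) rfl u v) huv =
        canD v hv ≫ (inv (Q.map ε₂) ≫ canD u hu)⟦p⟧' ≫
          (CategoryTheory.shiftFunctorAdd' (DerivedCategory C) q p (q + p) rfl).inv.app (Q.obj A₃) := by
  intro q p u hu v hv huv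
  have hu' : δ q (q + 1) (φ₂₃ q u) = 0 := by rw [hφ₂₃δ, hu, map_zero]
  have hv' : δ p (p + 1) (φ₁₂ p v) = 0 := by rw [hφ₁₂δ, hv, map_zero]
  have hw' : δ (q + p) (q + p + 1) (φ₁₃ (q + p) (μ q p (q + p) rfl u v)) = 0 := by
    rw [hφ₁₃δ, huv, map_zero]
  have hpq : p + q = q + p := by omega
  have hcomp : δ (q + p) (q + p + 1) ((φ₁₂ p v).comp (φ₂₃ q u) hpq) = 0 := by
    rw [δ_comp (φ₁₂ p v) (φ₂₃ q u) hpq (p + 1) (q + 1) (q + p + 1) rfl rfl rfl, hu', hv']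
    simp
  have hμ0v : μ q p (q + p) rfl 0 v = 0 := by
    have h := hμadd₁ q p (q + p) rfl 0 0 v
    rw [add_zero] at h
    exact left_eq_add.mp h
  have hμu0 : μ q p (q + p) rfl u 0 = 0 := by
    have h := hμadd₂ q p (q + p) rfl u 0 0
    rw [add_zero] at h
    exact left_eq_add.mp h
  have hμ00 : μ q p (q + p) rfl 0 0 = 0 := by
    have h := hμadd₁ q p (q + p) rfl 0 0 0
    rw [add_zero] at h
    exact left_eq_add.mp h
  have e1 := hH q p (q + p) rfl u v
  have e2 := hH q p (q + p) rfl 0 v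
  have e3 := hH q p (q + p) rfl u 0
  have e4 := hH q p (q + p) rfl 0 0
  simp only [hu, hv, hμ0v, hμu0, hμ00, map_zero, Cochain.comp_zero, Cochain.zero_comp,
    δ_zero, sub_zero, zero_sub] at e1 e2 e3 e4
  have key : φ₁₃ (q + p) (μ q p (q + p) rfl u v) - (φ₁₂ p v).comp (φ₂₃ q u) hpq =
      δ (q + p - 1) (q + p)
        (H q p (q + p - 1) (by omega) u v - H q p (q + p - 1) (by omega) 0 v -
          H q p (q + p - 1) (by omega) u 0 + H q p (q + p - 1) (by omega) 0 0) := by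
    rw [δ_add, δ_sub, δ_sub]
    exact quad e1 e2 e3 e4
  have hQeq : Q.map (cocycleToHom (φ₁₃ (q + p) (μ q p (q + p) rfl u v)) hw') =
      Q.map (cocycleToHom ((φ₁₂ p v).comp (φ₂₃ q u) hpq) hcomp) :=
    Q_map_cocycleToHom_congr _ _ _ _ _ key.symm
  have f1 := cocycleToHom_eq_comp ε₁ _ hw' _ huv (hφ₁₃ε (q + p) (μ q p (q + p) rfl u v))
  have f2 := cocycleToHom_eq_comp ε₂ _ hu' _ hu (hφ₂₃ε q u)
  have f3 := cocycleToHom_eq_comp ε₁ _ hv' _ hv (hφ₁₂ε p v)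
  have f4 := cocycleToHom_comp hpq (φ₁₂ p v) hv' (φ₂₃ q u) hu' hcomp
  simp only [canD, f1, f2, f3, Functor.map_comp, Category.assoc, IsIso.inv_hom_id_assoc]
  rw [reassoc_of% hQeq, f4]
  simp only [Functor.map_comp, Category.assoc]
  rw [commShift_compat]
end

section
/- If φ : ⟨V,A⟩ → ⟨A,A⟩ is a chain map of hom-complexes with φ(f) ∘ ε = f for all f, where ε : V → A is a right resolution, then the induced map H(φ) : [V,A] → [A,A] on cohomology (homotopy classes) is a section of the restriction map [ε,A] : [A,A] → [V,A]; consequently can_{V,A} = Ext(ε,A) ∘ can_{A,A} ∘ H(φ), i.e. the square relating H(φ), the canonical maps to Ext, and pre-composition with ε commutes. -/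
/-!
STATEMENT 17: If `φ : ⟨V,A⟩ → ⟨A,A⟩` is a chain map of hom-complexes with `φ(f) ∘ ε = f` for
all `f`, where `ε : V → A` is a right resolution, then the induced map
`H(φ) : [V,A] → [A,A]` is a section of the restriction map `[ε,A] : [A,A] → [V,A]`;
consequently `can_{V,A} = Ext(ε,A) ∘ can_{A,A} ∘ H(φ)`, i.e. the square relating `H(φ)`,
the canonical maps to Ext (morphisms in the derived category), and pre-composition with `ε`
commutes.
-/

open CategoryTheory Limits CochainComplex HomComplex DerivedCategory

universe u v w

variable {C : Type u} [Category.{v} C] [Abelian C] [HasDerivedCategory.{w} C]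

omit [HasDerivedCategory.{w} C] in
lemma cocycleToHom_precomp {F F' G : CochainComplex C ℤ} {n : ℤ} (e : F' ⟶ F)
    (w : Cochain F G n) (hw : δ n (n + 1) w = 0) (w' : Cochain F' G n)
    (hw' : δ n (n + 1) w' = 0) (h : (Cochain.ofHom e).comp w (zero_add n) = w') :
    e ≫ cocycleToHom w hw = cocycleToHom w' hw' := by
  ext p
  change e.f p ≫ (Cochain.rightShift w n 0 (zero_add n)).v p p (add_zero p) =
    (Cochain.rightShift w' n 0 (zero_add n)).v p p (add_zero p)
  rw [Cochain.rightShift_v _ n 0 (zero_add n) p p (add_zero p) (p + n) rfl,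
    Cochain.rightShift_v _ n 0 (zero_add n) p p (add_zero p) (p + n) rfl]
  subst h
  rw [Cochain.zero_cochain_comp_v, Cochain.ofHom_v, Category.assoc]

theorem section_and_can_square (V : C) (A : CochainComplex C ℤ)
    (hA : ∀ n : ℤ, n < 0 → IsZero (A.X n))
    (ε : (HomologicalComplex.single C (ComplexShape.up ℤ) 0).obj V ⟶ A) [QuasiIso ε]
    (φ : ∀ n : ℤ, Cochain ((HomologicalComplex.single C (ComplexShape.up ℤ) 0).obj V) A n →+
      Cochain A A n)
    (hφδ : ∀ (n : ℤ) (f : Cochain ((HomologicalComplex.single C (ComplexShape.up ℤ) 0).obj V) A n),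
      δ n (n + 1) (φ n f) = φ (n + 1) (δ n (n + 1) f))
    (hφε : ∀ (n : ℤ) (f : Cochain ((HomologicalComplex.single C (ComplexShape.up ℤ) 0).obj V) A n),
      (Cochain.ofHom ε).comp (φ n f) (zero_add n) = f) :
    ∀ (n : ℤ) (u : Cochain ((HomologicalComplex.single C (ComplexShape.up ℤ) 0).obj V) A n)
      (hu : δ n (n + 1) u = 0),
      -- H(φ) is a section of the restriction [ε,A] (at the level of representatives):
      (Cochain.ofHom ε).comp (φ n u) (zero_add n) = u ∧
      -- the square commutes: can_{V,A} = Ext(ε,A) ∘ can_{A,A} ∘ H(φ):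
      canD u hu = Q.map ε ≫ canD (φ n u) (by rw [hφδ, hu, map_zero]) := by
  intro n u hu
  refine ⟨hφε n u, ?_⟩
  unfold canD
  rw [← Q.map_comp_assoc, cocycleToHom_precomp ε (φ n u) _ u hu (hφε n u)]
end
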